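/- arXiv:1908.02549 — 8 statements merged into one kernel-verified Lean document; each statement's English description precedes it below -/
import Mathlib

section
/- If H : g → h is a crossed homomorphism with respect to an action ρ : g → Der(h), then the map ρ_H : g → gl(h) defined by ρ_H(x)(u) = ρ(x)(u) + [H(x), u]_h is a Lie algebra homomorphism from g to Der(h), i.e. ρ_H is again an action of g on h. -/
/-- If `H : g → h` is a crossed homomorphism with respect to an action
`ρ : g → Der(h)`, then `ρ_H (x) u = ρ x u + ⁅H x, u⁆` is again an action of `g` on `h`,
i.e. each `ρ_H x` is a derivation of `h` and `ρ_H` is a Lie algebra homomorphism. -/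
theorem crossed_hom_twisted_action
    {K g h : Type*} [Field K] [CharZero K]
    [LieRing g] [LieAlgebra K g] [LieRing h] [LieAlgebra K h]
    (ρ : g →ₗ[K] Module.End K h)
    (hder : ∀ (x : g) (u v : h), ρ x ⁅u, v⁆ = ⁅ρ x u, v⁆ + ⁅u, ρ x v⁆)
    (hhom : ∀ (x y : g) (u : h), ρ ⁅x, y⁆ u = ρ x (ρ y u) - ρ y (ρ x u))
    (H : g →ₗ[K] h)
    (hH : ∀ x y : g, H ⁅x, y⁆ = ρ x (H y) - ρ y (H x) + ⁅H x, H y⁆) :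
    (∀ (x : g) (u v : h),
      ρ x ⁅u, v⁆ + ⁅H x, ⁅u, v⁆⁆ =
        ⁅ρ x u + ⁅H x, u⁆, v⁆ + ⁅u, ρ x v + ⁅H x, v⁆⁆) ∧
    (∀ (x y : g) (u : h),
      ρ ⁅x, y⁆ u + ⁅H ⁅x, y⁆, u⁆ =
        (ρ x (ρ y u + ⁅H y, u⁆) + ⁅H x, ρ y u + ⁅H y, u⁆⁆) -
          (ρ y (ρ x u + ⁅H x, u⁆) + ⁅H y, ρ x u + ⁅H x, u⁆⁆)) := by
  constructor
  · intro x u v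
    rw [hder, leibniz_lie]
    simp only [add_lie, lie_add]
    abel
  · intro x y u
    simp only [map_add, map_sub, hhom, hH, hder, add_lie, sub_lie, lie_add, lie_lie]
    abel
end

section
/- Let ρ be an action of g on h and H : g → h a linear map such that ρ_H(x)(u) := ρ(x)(u) + [H x, u]_h defines an action of g on h. Then the linear map Ĥ : g ⋉_{ρ_H} h → g ⋉_ρ h defined by Ĥ(x,u) = (x, H x + u) is a Lie algebra isomorphism if and only if H is a crossed homomorphism with respect to ρ. -/
/-- The semidirect product bracket on `g × h` determined by a map `σ : g → h → h`. -/
def sdBracket {g h : Type*} [LieRing g] [LieRing h]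
    (σ : g → h → h) (p q : g × h) : g × h :=
  (⁅p.1, q.1⁆, σ p.1 q.2 - σ q.1 p.2 + ⁅p.2, q.2⁆)

/-- The map `Ĥ (x, u) = (x, H x + u)`. -/
def hatMap {K g h : Type*} [Field K]
    [LieRing g] [LieAlgebra K g] [LieRing h] [LieAlgebra K h]
    (H : g →ₗ[K] h) (p : g × h) : g × h :=
  (p.1, H p.1 + p.2)

/-- if `ρ_H` (given by `ρ_H x u = ρ x u + ⁅H x, u⁆`) is an action of `g`
on `h`, then `Ĥ : g ⋉_{ρ_H} h → g ⋉_ρ h`, `Ĥ(x,u) = (x, H x + u)`, is a Lie algebra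
isomorphism if and only if `H` is a crossed homomorphism with respect to `ρ`. -/
theorem hatMap_iso_iff_crossed_hom
    {K g h : Type*} [Field K] [CharZero K]
    [LieRing g] [LieAlgebra K g] [LieRing h] [LieAlgebra K h]
    (ρ : g →ₗ[K] Module.End K h)
    (hder : ∀ (x : g) (u v : h), ρ x ⁅u, v⁆ = ⁅ρ x u, v⁆ + ⁅u, ρ x v⁆)
    (hhom : ∀ (x y : g) (u : h), ρ ⁅x, y⁆ u = ρ x (ρ y u) - ρ y (ρ x u))
    (H : g →ₗ[K] h)
    (hρHder : ∀ (x : g) (u v : h),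
      ρ x ⁅u, v⁆ + ⁅H x, ⁅u, v⁆⁆ =
        ⁅ρ x u + ⁅H x, u⁆, v⁆ + ⁅u, ρ x v + ⁅H x, v⁆⁆)
    (hρHhom : ∀ (x y : g) (u : h),
      ρ ⁅x, y⁆ u + ⁅H ⁅x, y⁆, u⁆ =
        (ρ x (ρ y u + ⁅H y, u⁆) + ⁅H x, ρ y u + ⁅H y, u⁆⁆) -
          (ρ y (ρ x u + ⁅H x, u⁆) + ⁅H y, ρ x u + ⁅H x, u⁆⁆)) :
    (Function.Bijective (hatMap H) ∧
      ∀ p q : g × h,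
        hatMap H (sdBracket (fun x u => ρ x u + ⁅H x, u⁆) p q) =
          sdBracket (fun x u => ρ x u) (hatMap H p) (hatMap H q)) ↔
      ∀ x y : g, H ⁅x, y⁆ = ρ x (H y) - ρ y (H x) + ⁅H x, H y⁆ := by
  constructor
  · rintro ⟨-, hb⟩ x y
    have := hb (x, 0) (y, 0)
    simp [hatMap, sdBracket, Prod.ext_iff] at this
    linear_combination (norm := abel) this
  · intro hc
    constructor
    · constructor
      · intro p q hpq
        simp only [hatMap, Prod.ext_iff] at hpq
        obtain ⟨h1, h2⟩ := hpq
        rw [h1] at h2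
        exact Prod.ext h1 (add_left_cancel h2)
      · intro p
        exact ⟨(p.1, p.2 - H p.1), by simp [hatMap]⟩
    · intro p q
      simp only [hatMap, sdBracket, Prod.ext_iff, map_add]
      refine ⟨trivial, ?_⟩
      rw [hc p.1 q.1]
      simp only [map_add, lie_add, add_lie]
      have h1 : ⁅p.2, H q.1⁆ = -⁅H q.1, p.2⁆ := by rw [← lie_skew]
      rw [h1]
      abel
end

section
/- Let (A, L, [·,·]_L, α) be a Lie-Rinehart algebra, (M; ρ) a weak representation of L, g a K-Lie algebra and (V; θ) a representation of g. Then the map (ρ ⊞ θ) : L ⋉_α (g ⊗_K A) → gl_K(V ⊗_K M) defined by (ρ ⊞ θ)(x, g⊗a)(v⊗m) = v ⊗ ρ(x)m + θ(g)v ⊗ am is a weak representation of the semidirect product Lie-Rinehart algebra L ⋉_α (g ⊗_K A) on the A-module V ⊗_K M (where a(v⊗m) = v ⊗ am). -/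
open scoped TensorProduct

section

variable {K A L gK V M : Type*} [Field K] [CharZero K]
  [CommRing A] [Algebra K A]
  [LieRing L] [LieAlgebra K L] [Module A L]
  [LieRing gK] [LieAlgebra K gK]
  [AddCommGroup V] [Module K V]
  [AddCommGroup M] [Module K M] [Module A M] [SMulCommClass A K M]

/-- Scalar multiplication by `a : A` on `M`, as a `K`-linear map. -/
def aSmul (a : A) : M →ₗ[K] M where
  toFun m := a • m
  map_add' := smul_add a
  map_smul' c m := smul_comm a c m

/-- given a Lie–Rinehart algebra `(A, L, α)`, a weak representation
`(M; ρ)` of `L`, a `K`-Lie algebra `g` with representation `(V; θ)`, the map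
`(ρ ⊞ θ)(x, g ⊗ a)(v ⊗ m) = v ⊗ ρ x m + θ g v ⊗ a • m` is a weak representation of
the semidirect product Lie–Rinehart algebra `L ⋉_α (g ⊗ A)` on the `A`-module
`V ⊗ M` (with `a • (v ⊗ m) = v ⊗ a • m`): it is a Lie algebra homomorphism for the
semidirect product bracket and satisfies the weak representation compatibility with
the `A`-action and the anchor `(x, ξ) ↦ α x`. -/
theorem boxplus_weak_representation
    (α : L →ₗ[K] Module.End K A)
    (hαder : ∀ (x : L) (a b : A), α x (a * b) = α x a * b + a * α x b)
    (hαhom : ∀ (x y : L) (a : A), α ⁅x, y⁆ a = α x (α y a) - α y (α x a))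
    (hαA : ∀ (a : A) (x : L) (b : A), α (a • x) b = a * α x b)
    (hLeib : ∀ (x y : L) (a : A), ⁅x, a • y⁆ = a • ⁅x, y⁆ + α x a • y)
    (ρ : L →ₗ[K] Module.End K M)
    (hρhom : ∀ (x y : L) (m : M), ρ ⁅x, y⁆ m = ρ x (ρ y m) - ρ y (ρ x m))
    (hρmod : ∀ (x : L) (a : A) (m : M), ρ x (a • m) = a • ρ x m + α x a • m)
    (θ : gK →ₗ[K] Module.End K V)
    (hθ : ∀ (u w : gK) (v : V), θ ⁅u, w⁆ v = θ u (θ w v) - θ w (θ u v))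
    -- the Lie `A`-algebra bracket on `g ⊗ A`: `⁅u ⊗ a, w ⊗ b⁆ = ⁅u, w⁆ ⊗ ab`
    (brG : (gK ⊗[K] A) →ₗ[K] (gK ⊗[K] A) →ₗ[K] (gK ⊗[K] A))
    (hbrG : ∀ (u w : gK) (a b : A), brG (u ⊗ₜ a) (w ⊗ₜ b) = ⁅u, w⁆ ⊗ₜ (a * b))
    -- the action of `L` on `g ⊗ A` through the anchor: `x · (u ⊗ a) = u ⊗ α x a`
    (actα : L → (gK ⊗[K] A) →ₗ[K] (gK ⊗[K] A))
    (hactα : ∀ (x : L) (u : gK) (a : A), actα x (u ⊗ₜ a) = u ⊗ₜ α x a)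
    -- `Φ₂ (u ⊗ a) (v ⊗ m) = θ u v ⊗ a • m`
    (Φ₂ : (gK ⊗[K] A) →ₗ[K] Module.End K (V ⊗[K] M))
    (hΦ₂ : ∀ (u : gK) (a : A) (v : V) (m : M),
      Φ₂ (u ⊗ₜ a) (v ⊗ₜ m) = θ u v ⊗ₜ (a • m)) :
    (∀ p q : L × (gK ⊗[K] A),
      (LinearMap.lTensor V (ρ ⁅p.1, q.1⁆) +
          Φ₂ (actα p.1 q.2 - actα q.1 p.2 + brG p.2 q.2)) =
        (LinearMap.lTensor V (ρ p.1) + Φ₂ p.2) * (LinearMap.lTensor V (ρ q.1) + Φ₂ q.2) -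
          (LinearMap.lTensor V (ρ q.1) + Φ₂ q.2) * (LinearMap.lTensor V (ρ p.1) + Φ₂ p.2)) ∧
    (∀ (p : L × (gK ⊗[K] A)) (a : A) (t : V ⊗[K] M),
      (LinearMap.lTensor V (ρ p.1) + Φ₂ p.2) (LinearMap.lTensor V (aSmul a) t) =
        LinearMap.lTensor V (aSmul a) ((LinearMap.lTensor V (ρ p.1) + Φ₂ p.2) t) +
          LinearMap.lTensor V (aSmul (α p.1 a)) t) := by
  have haS : ∀ (a : A) (m : M), (aSmul (K := K) a) m = a • m := fun _ _ => rfl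
  have key0 : ∀ (x y : L), LinearMap.lTensor V (ρ ⁅x, y⁆) =
      LinearMap.lTensor V (ρ x) * LinearMap.lTensor V (ρ y) -
        LinearMap.lTensor V (ρ y) * LinearMap.lTensor V (ρ x) := by
    intro x y
    apply TensorProduct.ext'
    intro v m
    simp [hρhom, TensorProduct.tmul_sub]
  have key1 : ∀ (x : L) (η : gK ⊗[K] A), Φ₂ (actα x η) =
      LinearMap.lTensor V (ρ x) * Φ₂ η - Φ₂ η * LinearMap.lTensor V (ρ x) := by
    intro x η
    induction η using TensorProduct.induction_on with
    | zero => simp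
    | tmul u a =>
      apply TensorProduct.ext'
      intro v m
      simp [hactα, hΦ₂, Module.End.mul_apply, hρmod, TensorProduct.tmul_add]
    | add η₁ η₂ h1 h2 =>
      rw [map_add, map_add, h1, h2, map_add, mul_add, add_mul]
      abel
  have key2 : ∀ (ξ η : gK ⊗[K] A), Φ₂ (brG ξ η) =
      Φ₂ ξ * Φ₂ η - Φ₂ η * Φ₂ ξ := by
    intro ξ η
    induction ξ using TensorProduct.induction_on with
    | zero => simp
    | tmul u a =>
      induction η using TensorProduct.induction_on with
      | zero => simp
      | tmul w b =>
        apply TensorProduct.ext'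
        intro v m
        simp only [hbrG, hΦ₂, Module.End.mul_apply, LinearMap.sub_apply, hθ,
          TensorProduct.sub_tmul, smul_smul, mul_comm a b]
      | add η₁ η₂ h1 h2 =>
        rw [map_add, map_add, h1, h2, map_add, mul_add, add_mul]
        abel
    | add ξ₁ ξ₂ h1 h2 =>
      simp only [map_add, LinearMap.add_apply, h1, h2, add_mul, mul_add]
      abel
  have hz : ∀ (x : L) (a : A) (t : V ⊗[K] M),
      LinearMap.lTensor V (ρ x) (LinearMap.lTensor V (aSmul a) t) =
        LinearMap.lTensor V (aSmul a) (LinearMap.lTensor V (ρ x) t) +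
          LinearMap.lTensor V (aSmul (α x a)) t := by
    intro x a t
    induction t using TensorProduct.induction_on with
    | zero => simp
    | tmul v m => simp [haS, hρmod, TensorProduct.tmul_add]
    | add t₁ t₂ h1 h2 =>
      simp only [map_add, h1, h2]
      abel
  have hcomm : ∀ (ξ : gK ⊗[K] A) (a : A) (t : V ⊗[K] M),
      Φ₂ ξ (LinearMap.lTensor V (aSmul a) t) =
        LinearMap.lTensor V (aSmul a) (Φ₂ ξ t) := by
    intro ξ a
    induction ξ using TensorProduct.induction_on with
    | zero => intro t; simp
    | tmul u b =>
      intro t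
      induction t using TensorProduct.induction_on with
      | zero => simp
      | tmul v m =>
        simp only [LinearMap.lTensor_tmul, haS, hΦ₂, smul_smul, mul_comm a b]
      | add t₁ t₂ h1 h2 => simp only [map_add, h1, h2]
    | add ξ₁ ξ₂ h1 h2 =>
      intro t
      simp only [map_add, LinearMap.add_apply, h1, h2]
  constructor
  · rintro ⟨x, ξ⟩ ⟨y, η⟩
    simp only at *
    rw [key0, map_add, map_sub, key1, key1, key2]
    noncomm_ring
  · rintro ⟨x, ξ⟩ a t
    simp only [LinearMap.add_apply, hz, hcomm, map_add]
    abel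

end
end

section
/- Let (M; ρ) be an admissible representation of a Leibniz pair (A, S, [·,·]_S, β). Define ρ̄ : S ⊗_K A → gl_K(M) by ρ̄(x⊗a) = aρ(x). Then (M; ρ̄) is a representation of the action Lie-Rinehart algebra S ⊗_K A, i.e. ρ̄ is simultaneously an A-module homomorphism and a K-Lie algebra homomorphism into first order differential operators, with ρ̄(x⊗a)(bm) = b ρ̄(x⊗a)m + α(x⊗a)(b)m where α(x⊗a) = aβ(x). -/
open scoped TensorProduct

/-- if `(M; ρ)` is an admissible representation of a Leibniz pair
`(A, S, β)` then `ρ̄ (x ⊗ a) = a ρ(x)` is a representation of the action Lie–Rinehart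
algebra `S ⊗ A`: it is a Lie algebra homomorphism for the bracket of `S ⊗ A`, an
`A`-module homomorphism, and the first-order-differential-operator condition
`ρ̄(x⊗a)(b • m) = b • ρ̄(x⊗a) m + α(x⊗a)(b) • m` holds, where `α(x⊗a) = a β(x)`. -/
theorem admissible_to_lieRinehart_rep
    {K A S M : Type*} [Field K] [CharZero K]
    [CommRing A] [Algebra K A]
    [LieRing S] [LieAlgebra K S]
    [AddCommGroup M] [Module K M] [Module A M]
    (β : S →ₗ[K] Module.End K A)
    (hβder : ∀ (x : S) (a b : A), β x (a * b) = β x a * b + a * β x b)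
    (hβhom : ∀ (x y : S) (a : A), β ⁅x, y⁆ a = β x (β y a) - β y (β x a))
    (ρ : S →ₗ[K] Module.End K M)
    (hρhom : ∀ (x y : S) (m : M), ρ ⁅x, y⁆ m = ρ x (ρ y m) - ρ y (ρ x m))
    (hρmod : ∀ (x : S) (a : A) (m : M), ρ x (a • m) = a • ρ x m + β x a • m)
    -- the bracket on `S ⊗ A`
    (br : (S ⊗[K] A) →ₗ[K] (S ⊗[K] A) →ₗ[K] (S ⊗[K] A))
    (hbr : ∀ (x y : S) (a b : A),
      br (x ⊗ₜ a) (y ⊗ₜ b) =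
        ⁅x, y⁆ ⊗ₜ (a * b) + y ⊗ₜ (a * β x b) - x ⊗ₜ (b * β y a))
    -- the `A`-module structure on `S ⊗ A`
    (mod : A → (S ⊗[K] A) →ₗ[K] (S ⊗[K] A))
    (hmod : ∀ (a : A) (x : S) (b : A), mod a (x ⊗ₜ b) = x ⊗ₜ (a * b))
    -- the anchor on `S ⊗ A`
    (αm : (S ⊗[K] A) →ₗ[K] Module.End K A)
    (hαm : ∀ (x : S) (a b : A), αm (x ⊗ₜ a) b = a * β x b)
    -- the map `ρ̄ : S ⊗ A → gl_K(M)`, `ρ̄(x ⊗ a) = a ρ(x)`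
    (ρb : (S ⊗[K] A) →ₗ[K] Module.End K M)
    (hρb : ∀ (x : S) (a : A) (m : M), ρb (x ⊗ₜ a) m = a • ρ x m) :
    (∀ (t s : S ⊗[K] A) (m : M), ρb (br t s) m = ρb t (ρb s m) - ρb s (ρb t m)) ∧
    (∀ (a : A) (t : S ⊗[K] A) (m : M), ρb (mod a t) m = a • ρb t m) ∧
    (∀ (t : S ⊗[K] A) (b : A) (m : M), ρb t (b • m) = b • ρb t m + αm t b • m) := by
  refine ⟨?_, ?_, ?_⟩
  · intro t s m
    induction s using TensorProduct.induction_on generalizing m with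
    | zero => simp
    | add s1 s2 h1 h2 =>
      simp only [map_add, LinearMap.add_apply, map_add, h1, h2]
      abel
    | tmul y b =>
      induction t using TensorProduct.induction_on generalizing m with
      | zero => simp
      | add t1 t2 h1 h2 =>
        simp only [map_add, LinearMap.add_apply, map_add, h1, h2]
        abel
      | tmul x a =>
        simp only [hbr, map_add, map_sub, LinearMap.add_apply, LinearMap.sub_apply,
          hρb, hρmod, hρhom, smul_sub, smul_add, smul_smul]
        rw [mul_comm b a]
        abel
  · intro a t m
    induction t using TensorProduct.induction_on generalizing m with
    | zero => simp
    | add t1 t2 h1 h2 =>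
      simp only [map_add, LinearMap.add_apply, h1, h2, smul_add]
    | tmul x b => simp [hmod, hρb, mul_smul]
  · intro t b m
    induction t using TensorProduct.induction_on generalizing m with
    | zero => simp
    | add t1 t2 h1 h2 =>
      simp only [map_add, LinearMap.add_apply, h1, h2, smul_add, add_smul]
      abel
    | tmul x a =>
      simp only [hρb, hρmod, hαm, smul_add, smul_smul, mul_comm]
end

section
/- For the Witt algebra W_n = Der(C[x_1^{±1},...,x_n^{±1}]) with basis {x^r d_i} (where d_i = x_i ∂_i), the linear map H : W_n → gl_n ⊗ A_n defined by H(x^r d_j) = Σ_{i=1}^n r_i E_{ij} ⊗ x^r is a crossed homomorphism from W_n to gl_n ⊗ A_n with respect to the action ρ(w)(E ⊗ a) = E ⊗ w(a). -/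
open scoped TensorProduct

/-- for the Witt algebra `W_n = Der(ℂ[x₁^{±1},…,x_n^{±1}])`, spanned by
the basis elements `e r i = x^r d_i` (`r ∈ ℤⁿ`, `1 ≤ i ≤ n`) with bracket
`⁅x^r d_i, x^s d_j⁆ = s_i x^{r+s} d_j − r_j x^{r+s} d_i`, acting on the Laurent
polynomial algebra `A` (with monomials `xr r = x^r`, `x^r d_i (x^s) = s_i x^{r+s}`),
the linear map `H : W_n → gl_n ⊗ A` defined on the basis by
`H (x^r d_j) = ∑ i, r_i E_{ij} ⊗ x^r` is a crossed homomorphism with respect to the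
action `ρ(w)(E ⊗ a) = E ⊗ w(a)`, where `gl_n ⊗ A` carries the bracket
`⁅E ⊗ a, F ⊗ b⁆ = ⁅E, F⁆ ⊗ ab`. -/
theorem witt_crossed_hom (n : ℕ)
    {A W : Type*} [CommRing A] [Algebra ℂ A]
    [LieRing W] [LieAlgebra ℂ W]
    -- the basis `x^r d_i` of the Witt algebra and its structure constants
    (e : (Fin n → ℤ) → Fin n → W)
    (hspan : Submodule.span ℂ
      (Set.range fun p : (Fin n → ℤ) × Fin n => e p.1 p.2) = ⊤)
    (hbracket : ∀ (r s : Fin n → ℤ) (i j : Fin n),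
      ⁅e r i, e s j⁆ = (s i) • e (r + s) j - (r j) • e (r + s) i)
    -- the Laurent monomials `x^r` of `A`
    (xr : (Fin n → ℤ) → A)
    (hxr : ∀ r s : Fin n → ℤ, xr r * xr s = xr (r + s))
    -- the (derivation) action `D` of `W` on `A`
    (D : W →ₗ[ℂ] Module.End ℂ A)
    (hDder : ∀ (w : W) (a b : A), D w (a * b) = D w a * b + a * D w b)
    (hDhom : ∀ (w w' : W) (a : A), D ⁅w, w'⁆ a = D w (D w' a) - D w' (D w a))
    (hD : ∀ (r s : Fin n → ℤ) (i : Fin n),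
      D (e r i) (xr s) = ((s i : ℂ)) • xr (r + s))
    -- the Lie bracket on `gl_n ⊗ A`
    (br : (Matrix (Fin n) (Fin n) ℂ ⊗[ℂ] A) →ₗ[ℂ]
      (Matrix (Fin n) (Fin n) ℂ ⊗[ℂ] A) →ₗ[ℂ] (Matrix (Fin n) (Fin n) ℂ ⊗[ℂ] A))
    (hbr : ∀ (E F : Matrix (Fin n) (Fin n) ℂ) (a b : A),
      br (E ⊗ₜ a) (F ⊗ₜ b) = ⁅E, F⁆ ⊗ₜ (a * b))
    -- the action of `W` on `gl_n ⊗ A` through the second tensor factor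
    (ρ : W →ₗ[ℂ] Module.End ℂ (Matrix (Fin n) (Fin n) ℂ ⊗[ℂ] A))
    (hρ : ∀ (w : W) (E : Matrix (Fin n) (Fin n) ℂ) (a : A),
      ρ w (E ⊗ₜ a) = E ⊗ₜ D w a)
    -- the map `H`
    (H : W →ₗ[ℂ] (Matrix (Fin n) (Fin n) ℂ ⊗[ℂ] A))
    (hHdef : ∀ (r : Fin n → ℤ) (j : Fin n),
      H (e r j) = ∑ i : Fin n, ((r i : ℂ)) • (Matrix.single i j (1 : ℂ) ⊗ₜ xr r)) :
    ∀ w w' : W, H ⁅w, w'⁆ = ρ w (H w') - ρ w' (H w) + br (H w) (H w') := by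
  classical
  -- commutator of elementary matrices
  have hcomm : ∀ (k i l j : Fin n),
      (⁅Matrix.single k i (1:ℂ), Matrix.single l j (1:ℂ)⁆
        : Matrix (Fin n) (Fin n) ℂ)
      = (if i = l then Matrix.single k j (1:ℂ) else 0)
        - (if j = k then Matrix.single l i (1:ℂ) else 0) := by
    intro k i l j
    rw [Ring.lie_def]
    rcases eq_or_ne i l with h1 | h1 <;> rcases eq_or_ne j k with h2 | h2 <;>
      simp [h1, h2, Matrix.single_mul_single_same, Matrix.single_mul_single_of_ne,
        Ne.symm]
  have key : ∀ (r s : Fin n → ℤ) (i j : Fin n),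
      H ⁅e r i, e s j⁆ = ρ (e r i) (H (e s j)) - ρ (e s j) (H (e r i))
        + br (H (e r i)) (H (e s j)) := by
    intro r s i j
    have hL : H ⁅e r i, e s j⁆ =
        ∑ k : Fin n,
          (((s i : ℂ) * (((r + s) k : ℤ) : ℂ)) •
              (Matrix.single k j (1:ℂ) ⊗ₜ[ℂ] xr (r + s))
            - ((r j : ℂ) * (((r + s) k : ℤ) : ℂ)) •
              (Matrix.single k i (1:ℂ) ⊗ₜ[ℂ] xr (r + s))) := by
      rw [hbracket, map_sub, map_zsmul, map_zsmul, hHdef, hHdef, Finset.smul_sum,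
        Finset.smul_sum, ← Finset.sum_sub_distrib]
      refine Finset.sum_congr rfl fun k _ => ?_
      rw [← Int.cast_smul_eq_zsmul ℂ (s i), ← Int.cast_smul_eq_zsmul ℂ (r j),
        smul_smul, smul_smul]
    have hR1 : ρ (e r i) (H (e s j)) =
        ∑ k : Fin n, ((s k : ℂ) * (s i : ℂ)) •
          (Matrix.single k j (1:ℂ) ⊗ₜ[ℂ] xr (r + s)) := by
      rw [hHdef, map_sum]
      refine Finset.sum_congr rfl fun k _ => ?_
      rw [map_smul, hρ, hD, TensorProduct.tmul_smul, smul_smul]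
    have hR2 : ρ (e s j) (H (e r i)) =
        ∑ k : Fin n, ((r k : ℂ) * (r j : ℂ)) •
          (Matrix.single k i (1:ℂ) ⊗ₜ[ℂ] xr (r + s)) := by
      rw [hHdef, map_sum]
      refine Finset.sum_congr rfl fun k _ => ?_
      rw [map_smul, hρ, hD, TensorProduct.tmul_smul, smul_smul, add_comm s r]
    have hR3 : br (H (e r i)) (H (e s j)) =
        (∑ k : Fin n, ((r k : ℂ) * (s i : ℂ)) •
          (Matrix.single k j (1:ℂ) ⊗ₜ[ℂ] xr (r + s)))
        - ∑ k : Fin n, ((r j : ℂ) * (s k : ℂ)) •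
          (Matrix.single k i (1:ℂ) ⊗ₜ[ℂ] xr (r + s)) := by
      rw [hHdef, hHdef]
      simp only [map_sum, LinearMap.sum_apply]
      have term : ∀ l k : Fin n,
          (br ((r k : ℂ) • (Matrix.single k i (1:ℂ) ⊗ₜ[ℂ] xr r)))
            (((s l : ℂ)) • (Matrix.single l j (1:ℂ) ⊗ₜ[ℂ] xr s))
          = (if i = l then ((r k : ℂ) * (s l : ℂ)) •
              (Matrix.single k j (1:ℂ) ⊗ₜ[ℂ] xr (r + s)) else 0)
            - (if j = k then ((r k : ℂ) * (s l : ℂ)) •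
              (Matrix.single l i (1:ℂ) ⊗ₜ[ℂ] xr (r + s)) else 0) := by
        intro l k
        rw [map_smul, map_smul, LinearMap.smul_apply, hbr, hxr, hcomm,
          TensorProduct.sub_tmul]
        rcases eq_or_ne i l with h1 | h1 <;> rcases eq_or_ne j k with h2 | h2 <;>
          simp [h1, h2, TensorProduct.zero_tmul, smul_smul, smul_sub, mul_comm]
      rw [Finset.sum_congr rfl fun l _ => Finset.sum_congr rfl fun k _ => term l k]
      simp only [Finset.sum_sub_distrib]
      congr 1
      · have e1 : ∀ l : Fin n,
            (∑ k : Fin n, if i = l then ((r k : ℂ) * (s l : ℂ)) •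
                (Matrix.single k j (1:ℂ) ⊗ₜ[ℂ] xr (r + s)) else 0)
            = if i = l then ∑ k : Fin n, ((r k : ℂ) * (s l : ℂ)) •
                (Matrix.single k j (1:ℂ) ⊗ₜ[ℂ] xr (r + s)) else 0 := by
          intro l; split_ifs <;> simp
        rw [Finset.sum_congr rfl fun l _ => e1 l,
          Finset.sum_ite_eq Finset.univ i _, if_pos (Finset.mem_univ i)]
      · have e2 : ∀ l : Fin n,
            (∑ k : Fin n, if j = k then ((r k : ℂ) * (s l : ℂ)) •
                (Matrix.single l i (1:ℂ) ⊗ₜ[ℂ] xr (r + s)) else 0)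
            = ((r j : ℂ) * (s l : ℂ)) •
                (Matrix.single l i (1:ℂ) ⊗ₜ[ℂ] xr (r + s)) := by
          intro l
          rw [Finset.sum_ite_eq Finset.univ j _, if_pos (Finset.mem_univ j)]
        rw [Finset.sum_congr rfl fun l _ => e2 l]
    rw [hL, hR1, hR2, hR3, ← Finset.sum_sub_distrib, ← Finset.sum_sub_distrib,
      ← Finset.sum_add_distrib]
    refine Finset.sum_congr rfl fun k _ => ?_
    have h1 : (((r + s) k : ℤ) : ℂ) = (r k : ℂ) + (s k : ℂ) := by
      simp [Pi.add_apply]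
    rw [h1]
    module
  intro w w'
  have hw : w ∈ Submodule.span ℂ
      (Set.range fun p : (Fin n → ℤ) × Fin n => e p.1 p.2) := hspan ▸ Submodule.mem_top
  have hw' : w' ∈ Submodule.span ℂ
      (Set.range fun p : (Fin n → ℤ) × Fin n => e p.1 p.2) := hspan ▸ Submodule.mem_top
  refine Submodule.span_induction₂
    (p := fun x y _ _ => H ⁅x, y⁆ = ρ x (H y) - ρ y (H x) + br (H x) (H y))
    ?_ ?_ ?_ ?_ ?_ ?_ ?_ hw hw'
  · rintro x y ⟨⟨r, i⟩, rfl⟩ ⟨⟨t, j⟩, rfl⟩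
    exact key r t i j
  · intro y hy; simp
  · intro x hx; simp
  · intro x y z hx hy hz h1 h2
    simp only [add_lie, map_add, LinearMap.add_apply, h1, h2]
    abel
  · intro x y z hx hy hz h1 h2
    simp only [lie_add, map_add, LinearMap.add_apply, h1, h2]
    abel
  · intro c x y hx hy h
    simp only [smul_lie, map_smul, LinearMap.smul_apply, h, smul_sub, smul_add]
  · intro c x y hx hy h
    simp only [lie_smul, map_smul, LinearMap.smul_apply, h, smul_sub, smul_add]
end

section
/- Let A be a commutative C-algebra, Δ a space of commuting C-derivations of A such that AΔ is a free A-module with basis ∂_1,...,∂_n. The linear map H : W_n(A,Δ) → gl_n ⊗ A defined by H(Σ_i a_i ∂_i) = Σ_{i,j} E_{ij} ⊗ ∂_i(a_j) is a crossed homomorphism from W_n(A,Δ) to gl_n ⊗ A with respect to the action ρ(w)(E ⊗ a) = E ⊗ α(w)(a). -/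
open scoped TensorProduct

section

variable {A : Type*} [CommRing A] [Algebra ℂ A] {n : ℕ}

/-- The bracket of the generalized Witt algebra `W_n(A, Δ)`, identified with `Fin n → A`
through the free basis `∂_1, …, ∂_n`: `⁅∑ aᵢ∂ᵢ, ∑ bⱼ∂ⱼ⁆ = ∑ (∑ᵢ aᵢ∂ᵢ(b_k) − bᵢ∂ᵢ(a_k)) ∂_k`. -/
def wittBracket (der : Fin n → Module.End ℂ A) (a b : Fin n → A) : Fin n → A :=
  fun k => ∑ i : Fin n, (a i * der i (b k) - b i * der i (a k))

/-- The anchor `α(∑ aᵢ∂ᵢ) = ∑ aᵢ∂ᵢ ∈ Der(A)` of `W_n(A, Δ)` as a `ℂ`-linear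
endomorphism of `A`. -/
noncomputable def wittAct (der : Fin n → Module.End ℂ A) (a : Fin n → A) :
    Module.End ℂ A :=
  ∑ i : Fin n, (LinearMap.mulLeft ℂ (a i)) ∘ₗ der i

/-- The map `H(∑ᵢ aᵢ∂ᵢ) = ∑ᵢ ∑ⱼ E_{ij} ⊗ ∂ᵢ(aⱼ) : W_n(A,Δ) → gl_n ⊗ A`. -/
noncomputable def wittH (der : Fin n → Module.End ℂ A) (a : Fin n → A) :
    Matrix (Fin n) (Fin n) ℂ ⊗[ℂ] A :=
  ∑ i : Fin n, ∑ j : Fin n, Matrix.single i j (1 : ℂ) ⊗ₜ der i (a j)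

/-- Auxiliary linear equivalence `gl_n ⊗ A ≃ Matrix n n A` used to compare entries. -/
noncomputable def toMat : (Matrix (Fin n) (Fin n) ℂ ⊗[ℂ] A) ≃ₗ[ℂ] Matrix (Fin n) (Fin n) A :=
  (TensorProduct.comm ℂ _ A).trans
    ((matrixEquivTensor (Fin n) ℂ A).toLinearEquiv.symm)

theorem toMat_tmul (E : Matrix (Fin n) (Fin n) ℂ) (x : A) :
    toMat (E ⊗ₜ x) = E.map fun c => x * algebraMap ℂ A c := by
  simp [toMat, matrixEquivTensor_apply_symm]
  rfl

theorem toMat_std (i j p q : Fin n) (x : A) :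
    toMat ((Matrix.single i j (1:ℂ)) ⊗ₜ x) p q
      = if i = p ∧ j = q then x else 0 := by
  simp [toMat_tmul, Matrix.single_apply, apply_ite (algebraMap ℂ A)]

set_option maxHeartbeats 1000000 in
set_option synthInstance.maxHeartbeats 400000 in
theorem toMat_lie (i j k l p q : Fin n) (x : A) :
    toMat (⁅Matrix.single i j (1:ℂ), Matrix.single k l (1:ℂ)⁆ ⊗ₜ x) p q
      = (if j = k ∧ i = p ∧ l = q then x else 0)
        - (if l = i ∧ k = p ∧ j = q then x else 0) := by
  rw [Ring.lie_def, TensorProduct.sub_tmul, map_sub, Matrix.sub_apply]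
  by_cases h1 : j = k <;> by_cases h2 : l = i <;>
    simp [h1, h2, Matrix.single_mul_single_same, Matrix.single_mul_single_of_ne, toMat_std]

set_option maxHeartbeats 1000000 in
set_option synthInstance.maxHeartbeats 400000 in
/-- for a commutative `ℂ`-algebra `A` and commuting derivations
`∂_1, …, ∂_n` of `A` (a free `A`-basis of `AΔ`), the map
`H(∑ aᵢ∂ᵢ) = ∑_{i,j} E_{ij} ⊗ ∂ᵢ(aⱼ)` is a crossed homomorphism from the generalized
Witt algebra `W_n(A, Δ)` to `gl_n ⊗ A` with respect to the action
`ρ(w)(E ⊗ a) = E ⊗ α(w)(a)`, where `gl_n ⊗ A` has bracket `⁅E⊗a, F⊗b⁆ = ⁅E,F⁆ ⊗ ab`. -/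
theorem generalized_witt_crossed_hom
    (der : Fin n → Module.End ℂ A)
    (hder : ∀ (i : Fin n) (a b : A), der i (a * b) = der i a * b + a * der i b)
    (hcomm : ∀ (i j : Fin n) (a : A), der i (der j a) = der j (der i a))
    -- the Lie bracket on `gl_n ⊗ A`
    (br : (Matrix (Fin n) (Fin n) ℂ ⊗[ℂ] A) →ₗ[ℂ]
      (Matrix (Fin n) (Fin n) ℂ ⊗[ℂ] A) →ₗ[ℂ] (Matrix (Fin n) (Fin n) ℂ ⊗[ℂ] A))
    (hbr : ∀ (E F : Matrix (Fin n) (Fin n) ℂ) (a b : A),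
      br (E ⊗ₜ a) (F ⊗ₜ b) = ⁅E, F⁆ ⊗ₜ (a * b)) :
    ∀ a b : Fin n → A,
      wittH der (wittBracket der a b) =
        LinearMap.lTensor (Matrix (Fin n) (Fin n) ℂ) (wittAct der a) (wittH der b) -
          LinearMap.lTensor (Matrix (Fin n) (Fin n) ℂ) (wittAct der b) (wittH der a) +
          br (wittH der a) (wittH der b) := by
  intro a b
  have hbrterm : br (wittH der a) (wittH der b) =
      ∑ k : Fin n, ∑ l : Fin n, ∑ i : Fin n, ∑ j : Fin n,
        ⁅Matrix.single i j (1:ℂ), Matrix.single k l (1:ℂ)⁆ ⊗ₜ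
          (der i (a j) * der k (b l)) := by
    simp only [wittH, map_sum, LinearMap.sum_apply, hbr]
  apply toMat.injective
  ext p q
  rw [hbrterm]
  simp only [wittH, wittBracket, wittAct, map_sum, map_add, map_sub,
    LinearMap.lTensor_tmul, LinearMap.sum_apply, LinearMap.comp_apply,
    LinearMap.mulLeft_apply, Matrix.sum_apply, Matrix.add_apply, Matrix.sub_apply,
    toMat_std]
  simp only [toMat_lie]
  simp only [Finset.sum_sub_distrib, ite_and, Finset.sum_ite_eq, Finset.sum_ite_eq',
    Finset.sum_ite_irrel, Finset.sum_const_zero, Finset.mem_univ, if_true]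
  simp only [hder, hcomm p, Finset.sum_add_distrib, Finset.sum_sub_distrib]
  have h : (∑ x : Fin n, der x (a q) * der p (b x))
      = ∑ x : Fin n, der p (b x) * der x (a q) :=
    Finset.sum_congr rfl fun x _ => mul_comm _ _
  rw [h]; ring

end
end

section
/- Let H : g → h be a crossed homomorphism with respect to ρ, and let d_{ρ_H} be the Chevalley-Eilenberg coboundary operator of the representation ρ_H(x)u = ρ(x)u + [H x, u]_h. Then for every f ∈ Hom(Λ^k g, h), d_{ρ_H} f = (−1)^{k−1} d_H f, where d_H = d + ⟦H, ·⟧ is the twisted differential on the dgLa (C*(g,h), ⟦·,·⟧, d). -/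
open scoped Classical

section

variable {K g h : Type*} [Field K] [CharZero K]
  [LieRing g] [LieAlgebra K g] [LieRing h] [LieAlgebra K h]

/-- `(m, n)`-shuffles: permutations of `Fin (m+n)` increasing on the first `m` and on
the last `n` indices. -/
def IsShuffle (m n : ℕ) (σ : Equiv.Perm (Fin (m + n))) : Prop :=
  (∀ i j : Fin m, i < j → σ (Fin.castAdd n i) < σ (Fin.castAdd n j)) ∧
  (∀ i j : Fin n, i < j → σ (Fin.natAdd m i) < σ (Fin.natAdd m j))

/-- The graded bracket `⟦f₁, f₂⟧` on `C*(g, h) = ⊕ₖ Hom(Λᵏ g, h)`. -/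
noncomputable def gBr {g h : Type*} [LieRing g] [LieRing h] {m n : ℕ}
    (f₁ : (Fin m → g) → h) (f₂ : (Fin n → g) → h) : (Fin (m + n) → g) → h :=
  fun x => ((-1 : ℤ) ^ (m * n + 1)) •
    ∑ σ : Equiv.Perm (Fin (m + n)),
      if IsShuffle m n σ then
        ((Equiv.Perm.sign σ : ℤ)) •
          ⁅f₁ fun i => x (σ (Fin.castAdd n i)), f₂ fun i => x (σ (Fin.natAdd m i))⁆
      else 0

/-- The differential `d` on `C*(g, h)` determined by the action `ρ` (the value of
`d f` on `(x₁, …, x_{m+1})`, written using that `f` is alternating). -/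
noncomputable def gD (ρ : g →ₗ[K] Module.End K h) {m : ℕ}
    (f : (Fin m → g) → h) : (Fin (m + 1) → g) → h :=
  fun x =>
    (∑ i : Fin (m + 1), ((-1 : ℤ) ^ (m + (i : ℕ) + 1)) • ρ (x i) (f (i.removeNth x))) +
    ∑ j : Fin (m + 1), ∑ i : Fin (j : ℕ),
      ((-1 : ℤ) ^ (m + (j : ℕ) + 1)) •
        f (Function.update (j.removeNth x)
            ⟨(i : ℕ), by have := i.isLt; have := j.isLt; omega⟩
            ⁅x ⟨(i : ℕ), by have := i.isLt; have := j.isLt; omega⟩, x j⁆)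

/-- Reindexing a cochain along an equality of arities. -/
def recast {g h : Type*} {a b : ℕ} (e : a = b)
    (f : (Fin a → g) → h) : (Fin b → g) → h :=
  fun x => f fun i => x (Fin.cast e i)

end
section

variable {K g h : Type*} [Field K] [CharZero K]
  [LieRing g] [LieAlgebra K g] [LieRing h] [LieAlgebra K h]

/-- The Chevalley–Eilenberg coboundary operator of the representation
`ρ_H x u = ρ x u + ⁅H x, u⁆` on `h` (the value on `(x₁, …, x_{k+1})`, written using
that `f` is alternating). -/
noncomputable def gDH (ρ : g →ₗ[K] Module.End K h) (H : g →ₗ[K] h) {k : ℕ}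
    (f : (Fin k → g) → h) : (Fin (k + 1) → g) → h :=
  fun x =>
    (∑ i : Fin (k + 1), ((-1 : ℤ) ^ (i : ℕ)) •
      (ρ (x i) (f (i.removeNth x)) + ⁅H (x i), f (i.removeNth x)⁆)) +
    ∑ j : Fin (k + 1), ∑ i : Fin (j : ℕ),
      ((-1 : ℤ) ^ (j : ℕ)) •
        f (Function.update (j.removeNth x)
            ⟨(i : ℕ), by have := i.isLt; have := j.isLt; omega⟩
            ⁅x ⟨(i : ℕ), by have := i.isLt; have := j.isLt; omega⟩, x j⁆)

namespace CEAux

variable {k : ℕ}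

/-- The permutation of `Fin (1+k)` sending `0` to `i` and increasing on the rest. -/
noncomputable def insPerm (k : ℕ) (i : Fin (k + 1)) : Equiv.Perm (Fin (1 + k)) :=
  (finCongr (Nat.add_comm 1 k).symm).permCongr (Fin.cycleRange i).symm

lemma insPerm_castAdd (i : Fin (k + 1)) (j : Fin 1) :
    ((insPerm k i (Fin.castAdd k j) : Fin (1 + k)) : ℕ) = (i : ℕ) := by
  have hj : Fin.cast (Nat.add_comm 1 k) (Fin.castAdd k j) = (0 : Fin (k + 1)) := by
    ext
    simp
  simp [insPerm, Equiv.permCongr_apply, hj, Fin.cycleRange_symm_zero]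

lemma insPerm_natAdd (i : Fin (k + 1)) (j : Fin k) :
    ((insPerm k i (Fin.natAdd 1 j) : Fin (1 + k)) : ℕ) = ((i.succAbove j : Fin (k + 1)) : ℕ) := by
  have hj : Fin.cast (Nat.add_comm 1 k) (Fin.natAdd 1 j) = Fin.succ j := by
    ext
    simp
  simp [insPerm, Equiv.permCongr_apply, hj, Fin.cycleRange_symm_succ]

lemma sign_insPerm (i : Fin (k + 1)) :
    (Equiv.Perm.sign (insPerm k i) : ℤ) = (-1) ^ (i : ℕ) := by
  rw [insPerm, Equiv.Perm.sign_permCongr, Equiv.Perm.sign_symm, Fin.sign_cycleRange]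
  simp

lemma isShuffle_insPerm (i : Fin (k + 1)) : IsShuffle 1 k (insPerm k i) := by
  constructor
  · intro a b hab
    exact absurd (Subsingleton.elim a b ▸ hab) (lt_irrefl _)
  · intro a b hab
    rw [Fin.lt_def, insPerm_natAdd, insPerm_natAdd]
    rw [← Fin.lt_def, Fin.succAbove_lt_succAbove_iff]
    exact hab

lemma shuffle_ext {σ τ : Equiv.Perm (Fin (1 + k))}
    (hσ : IsShuffle 1 k σ) (hτ : IsShuffle 1 k τ)
    (h0 : σ (Fin.castAdd k 0) = τ (Fin.castAdd k 0)) : σ = τ := by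
  set a := σ (Fin.castAdd k 0) with ha
  have hcard : (Finset.univ.erase a).card = k := by
    rw [Finset.card_erase_of_mem (Finset.mem_univ _)]
    simp
  have mem : ∀ (π : Equiv.Perm (Fin (1 + k))), π (Fin.castAdd k 0) = a →
      ∀ j : Fin k, π (Fin.natAdd 1 j) ∈ Finset.univ.erase a := by
    intro π hπ j
    refine Finset.mem_erase.2 ⟨?_, Finset.mem_univ _⟩
    rw [← hπ]
    intro hc
    have := π.injective hc
    simp [Fin.ext_iff] at this
  have mono : ∀ (π : Equiv.Perm (Fin (1 + k))), IsShuffle 1 k π →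
      StrictMono (fun j : Fin k => π (Fin.natAdd 1 j)) := fun π hπ a b hab => hπ.2 a b hab
  have h1 : (fun j : Fin k => σ (Fin.natAdd 1 j)) = (Finset.univ.erase a).orderEmbOfFin hcard :=
    Finset.orderEmbOfFin_unique hcard (mem σ rfl) (mono σ hσ)
  have h2 : (fun j : Fin k => τ (Fin.natAdd 1 j)) = (Finset.univ.erase a).orderEmbOfFin hcard :=
    Finset.orderEmbOfFin_unique hcard (mem τ h0.symm) (mono τ hτ)
  apply Equiv.ext
  intro b
  rcases Nat.eq_zero_or_pos b.val with hb | hb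
  · have hb' : b = Fin.castAdd k 0 := by ext; simpa using hb
    rw [hb']; exact h0
  · have hb' : b = Fin.natAdd 1 ⟨b.val - 1, by omega⟩ := by ext; simp; omega
    rw [hb']
    exact congrFun (h1.trans h2.symm) ⟨b.val - 1, by omega⟩

lemma sum_shuffle {M : Type*} [AddCommMonoid M] (F : Equiv.Perm (Fin (1 + k)) → M) :
    (∑ σ : Equiv.Perm (Fin (1 + k)), if IsShuffle 1 k σ then F σ else 0)
      = ∑ i : Fin (k + 1), F (insPerm k i) := by
  rw [← Finset.sum_filter]
  refine Finset.sum_nbij'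
    (fun σ => Fin.cast (Nat.add_comm 1 k) (σ (Fin.castAdd k 0)))
    (fun i => insPerm k i) ?_ ?_ ?_ ?_ ?_
  · intro σ _; exact Finset.mem_univ _
  · intro i _
    simpa using isShuffle_insPerm i
  · intro σ hσ
    rw [Finset.mem_filter] at hσ
    refine shuffle_ext (isShuffle_insPerm _) hσ.2 ?_
    ext
    rw [insPerm_castAdd]
    simp
  · intro i _
    ext
    simpa using insPerm_castAdd i 0
  · intro σ hσ
    rw [Finset.mem_filter] at hσ
    refine congrArg F ?_
    refine (shuffle_ext (isShuffle_insPerm _) hσ.2 ?_).symm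
    ext
    rw [insPerm_castAdd]
    simp

end CEAux

/-- for a crossed homomorphism `H : g → h` with respect to `ρ`, the
Chevalley–Eilenberg coboundary `d_{ρ_H}` of the representation `ρ_H` and the twisted
differential `d_H = d + ⟦H, ·⟧` of the dgLa `(C*(g,h), ⟦·,·⟧, d)` are related by
`d_{ρ_H} f = (−1)^{k−1} d_H f` for every `f ∈ Hom(Λᵏ g, h)`. -/
theorem ce_coboundary_eq_twisted_differential
    (ρ : g →ₗ[K] Module.End K h)
    (hder : ∀ (x : g) (u v : h), ρ x ⁅u, v⁆ = ⁅ρ x u, v⁆ + ⁅u, ρ x v⁆)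
    (hhom : ∀ (x y : g) (u : h), ρ ⁅x, y⁆ u = ρ x (ρ y u) - ρ y (ρ x u))
    (H : g →ₗ[K] h)
    (hH : ∀ x y : g, H ⁅x, y⁆ = ρ x (H y) - ρ y (H x) + ⁅H x, H y⁆) :
    ∀ (k : ℕ) (f : AlternatingMap K g h (Fin k)),
      gDH ρ H (⇑f) =
        ((-1 : ℤ) ^ (k + 1)) •
          (gD ρ (⇑f) +
            recast (Nat.add_comm 1 k)
              (gBr (fun x : Fin 1 → g => H (x 0)) (⇑f))) := by
  intro k f
  funext x
  simp only [gDH, gD, gBr, recast, Pi.add_apply, Pi.smul_apply, smul_add]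
  have e1 : ((-1 : ℤ) ^ (k + 1)) •
      (∑ i : Fin (k + 1), ((-1 : ℤ) ^ (k + (i : ℕ) + 1)) • (ρ (x i)) (f (i.removeNth x)))
      = ∑ i : Fin (k + 1), ((-1 : ℤ) ^ (i : ℕ)) • (ρ (x i)) (f (i.removeNth x)) := by
    rw [Finset.smul_sum]
    refine Finset.sum_congr rfl fun i _ => ?_
    rw [smul_smul, ← pow_add]
    congr 1
    have hexp : k + 1 + (k + (i : ℕ) + 1) = 2 * (k + 1) + (i : ℕ) := by omega
    rw [hexp, pow_add, pow_mul, neg_one_sq, one_pow, one_mul]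
  have e2 : ((-1 : ℤ) ^ (k + 1)) •
        (∑ j : Fin (k + 1), ∑ i : Fin (j : ℕ),
          ((-1 : ℤ) ^ (k + (j : ℕ) + 1)) •
            f (Function.update (j.removeNth x)
                ⟨(i : ℕ), by have := i.isLt; have := j.isLt; omega⟩
                ⁅x ⟨(i : ℕ), by have := i.isLt; have := j.isLt; omega⟩, x j⁆))
      = ∑ j : Fin (k + 1), ∑ i : Fin (j : ℕ),
          ((-1 : ℤ) ^ (j : ℕ)) •
            f (Function.update (j.removeNth x)
                ⟨(i : ℕ), by have := i.isLt; have := j.isLt; omega⟩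
                ⁅x ⟨(i : ℕ), by have := i.isLt; have := j.isLt; omega⟩, x j⁆) := by
    rw [Finset.smul_sum]
    refine Finset.sum_congr rfl fun j _ => ?_
    rw [Finset.smul_sum]
    refine Finset.sum_congr rfl fun i _ => ?_
    rw [smul_smul, ← pow_add]
    congr 1
    have hexp : k + 1 + (k + (j : ℕ) + 1) = 2 * (k + 1) + (j : ℕ) := by omega
    rw [hexp, pow_add, pow_mul, neg_one_sq, one_pow, one_mul]
  have e3 : ((-1 : ℤ) ^ (k + 1)) • ((-1 : ℤ) ^ (1 * k + 1)) •
      (∑ σ : Equiv.Perm (Fin (1 + k)),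
        if IsShuffle 1 k σ then
          ((Equiv.Perm.sign σ : ℤ)) •
            ⁅H (x (Fin.cast (Nat.add_comm 1 k) (σ (Fin.castAdd k 0)))),
              f fun i => x (Fin.cast (Nat.add_comm 1 k) (σ (Fin.natAdd 1 i)))⁆
        else 0)
      = ∑ i : Fin (k + 1), ((-1 : ℤ) ^ (i : ℕ)) • ⁅H (x i), f (i.removeNth x)⁆ := by
    rw [smul_smul, ← pow_add]
    have hexp : k + 1 + (1 * k + 1) = 2 * (k + 1) := by omega
    rw [hexp, pow_mul, neg_one_sq, one_pow, one_smul]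
    rw [CEAux.sum_shuffle]
    refine Finset.sum_congr rfl fun i _ => ?_
    have h0 : x (Fin.cast (Nat.add_comm 1 k) (CEAux.insPerm k i (Fin.castAdd k 0))) = x i := by
      congr 1
      ext
      simpa using CEAux.insPerm_castAdd i 0
    have h1 : (fun j => x (Fin.cast (Nat.add_comm 1 k) (CEAux.insPerm k i (Fin.natAdd 1 j))))
        = i.removeNth x := by
      funext j
      show _ = x (i.succAbove j)
      congr 1
      ext
      simpa using CEAux.insPerm_natAdd i j
    rw [h0, h1, CEAux.sign_insPerm]
  rw [Finset.sum_add_distrib, e1, e2, e3]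
  abel


end
end

section
/- Let H : g → h be a crossed homomorphism with respect to ρ and 𝔥 : g → h a linear map. Then H_t = H + t𝔥 is a crossed homomorphism with respect to ρ for all t ∈ K if and only if: (1) ρ(x)𝔥(y) − ρ(y)𝔥(x) + [H x, 𝔥 y]_h + [𝔥 x, H y]_h − 𝔥[x,y]_g = 0 and (2) [𝔥 x, 𝔥 y]_h = 0, for all x, y ∈ g. -/
/-- for a crossed homomorphism `H` and a linear map `𝔥 : g → h`,
`H_t = H + t 𝔥` is a crossed homomorphism for all `t ∈ K` if and only if `𝔥` is a
1-cocycle for `ρ_H` and has abelian image bracket, i.e. conditions (1) and (2). -/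
theorem linear_deformation_iff
    {K g h : Type*} [Field K] [CharZero K]
    [LieRing g] [LieAlgebra K g] [LieRing h] [LieAlgebra K h]
    (ρ : g →ₗ[K] Module.End K h)
    (hder : ∀ (x : g) (u v : h), ρ x ⁅u, v⁆ = ⁅ρ x u, v⁆ + ⁅u, ρ x v⁆)
    (hhom : ∀ (x y : g) (u : h), ρ ⁅x, y⁆ u = ρ x (ρ y u) - ρ y (ρ x u))
    (H : g →ₗ[K] h)
    (hH : ∀ x y : g, H ⁅x, y⁆ = ρ x (H y) - ρ y (H x) + ⁅H x, H y⁆)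
    (𝔥 : g →ₗ[K] h) :
    (∀ (t : K) (x y : g),
      (H + t • 𝔥) ⁅x, y⁆ =
        ρ x ((H + t • 𝔥) y) - ρ y ((H + t • 𝔥) x) + ⁅(H + t • 𝔥) x, (H + t • 𝔥) y⁆) ↔
    ((∀ x y : g,
        ρ x (𝔥 y) - ρ y (𝔥 x) + ⁅H x, 𝔥 y⁆ + ⁅𝔥 x, H y⁆ - 𝔥 ⁅x, y⁆ = 0) ∧
      (∀ x y : g, ⁅𝔥 x, 𝔥 y⁆ = 0)) := by
  constructor
  · intro hyp
    have key : ∀ (t : K) (x y : g),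
        t • (ρ x (𝔥 y) - ρ y (𝔥 x) + ⁅H x, 𝔥 y⁆ + ⁅𝔥 x, H y⁆ - 𝔥 ⁅x, y⁆)
          + (t * t) • ⁅𝔥 x, 𝔥 y⁆ = 0 := by
      intro t x y
      have h1 := hyp t x y
      simp only [LinearMap.add_apply, LinearMap.smul_apply, map_add, map_smul,
        lie_add, add_lie, smul_lie, lie_smul, smul_smul, hH x y] at h1
      linear_combination (norm := module) -h1
    have hB : ∀ x y : g, ⁅𝔥 x, 𝔥 y⁆ = 0 := by
      intro x y
      have k1 := key 1 x y
      have k2 := key 2 x y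
      have : (2 : K) • ⁅𝔥 x, 𝔥 y⁆ = 0 := by
        linear_combination (norm := module) k2 - (2 : K) • k1
      have h2 : (2 : K) ≠ 0 := two_ne_zero
      exact (smul_eq_zero.mp this).resolve_left h2
    refine ⟨fun x y => ?_, hB⟩
    have k1 := key 1 x y
    have := hB x y
    linear_combination (norm := module) k1 - this
  · rintro ⟨h1, h2⟩ t x y
    simp only [LinearMap.add_apply, LinearMap.smul_apply, map_add, map_smul]
    rw [hH x y]
    have e1 := h1 x y
    have e2 := h2 x y
    simp only [lie_add, add_lie, smul_lie, lie_smul, smul_smul]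
    linear_combination (norm := module) (-t) • e1 - (t * t) • e2
end
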